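/- Let r ≥ 3 and s ≥ 3 be integers. Then the four functions θ3, η1, η2, η3 are linearly independent over ℂ in the complex vector space of all functions (M_{r×s})³ × (M_{s×r})² → M_{r×s}. -/

import Mathlib

open Matrix

noncomputable def ip {r s : ℕ} (u : Matrix (Fin r) (Fin s) ℂ)
    (v : Matrix (Fin s) (Fin r) ℂ) : ℂ := (u * v).trace

/-- The value of the invariant vector-valued `(3,2)`-form `θ₃` at the base point. -/
noncomputable def theta3 {r s : ℕ} (u1 u2 u3 : Matrix (Fin r) (Fin s) ℂ)
    (v1 v2 : Matrix (Fin s) (Fin r) ℂ) : Matrix (Fin r) (Fin s) ℂ :=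
  (2 : ℂ) • ((ip u2 v1 * ip u3 v2 - ip u2 v2 * ip u3 v1) • u1
    - (ip u1 v1 * ip u3 v2 - ip u1 v2 * ip u3 v1) • u2
    + (ip u1 v1 * ip u2 v2 - ip u1 v2 * ip u2 v1) • u3)

/-- The value of the invariant vector-valued `(3,2)`-form `η₁` at the base point. -/
noncomputable def eta1 {r s : ℕ} (u1 u2 u3 : Matrix (Fin r) (Fin s) ℂ)
    (v1 v2 : Matrix (Fin s) (Fin r) ℂ) : Matrix (Fin r) (Fin s) ℂ :=
  (2 : ℂ) • ((u1 * v1 * u2 * v2).trace • u3 + (u2 * v1 * u3 * v2).trace • u1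
    + (u3 * v1 * u1 * v2).trace • u2 - (u2 * v1 * u1 * v2).trace • u3
    - (u3 * v1 * u2 * v2).trace • u1 - (u1 * v1 * u3 * v2).trace • u2)

/-- The value of the invariant vector-valued `(3,2)`-form `η₂` at the base point. -/
noncomputable def eta2 {r s : ℕ} (u1 u2 u3 : Matrix (Fin r) (Fin s) ℂ)
    (v1 v2 : Matrix (Fin s) (Fin r) ℂ) : Matrix (Fin r) (Fin s) ℂ :=
  ip u1 v1 • (u2 * v2 * u3) + ip u2 v1 • (u3 * v2 * u1) + ip u3 v1 • (u1 * v2 * u2)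
    - ip u2 v1 • (u1 * v2 * u3) - ip u3 v1 • (u2 * v2 * u1) - ip u1 v1 • (u3 * v2 * u2)
    - ip u1 v2 • (u2 * v1 * u3) - ip u2 v2 • (u3 * v1 * u1) - ip u3 v2 • (u1 * v1 * u2)
    + ip u2 v2 • (u1 * v1 * u3) + ip u3 v2 • (u2 * v1 * u1) + ip u1 v2 • (u3 * v1 * u2)

/-- The value of the invariant vector-valued `(3,2)`-form `η₃` at the base point. -/
noncomputable def eta3 {r s : ℕ} (u1 u2 u3 : Matrix (Fin r) (Fin s) ℂ)
    (v1 v2 : Matrix (Fin s) (Fin r) ℂ) : Matrix (Fin r) (Fin s) ℂ :=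
  u1 * v1 * u2 * v2 * u3 + u2 * v1 * u3 * v2 * u1 + u3 * v1 * u1 * v2 * u2
    - u2 * v1 * u1 * v2 * u3 - u3 * v1 * u2 * v2 * u1 - u1 * v1 * u3 * v2 * u2
    - u1 * v2 * u2 * v1 * u3 - u2 * v2 * u3 * v1 * u1 - u3 * v2 * u1 * v1 * u2
    + u2 * v2 * u1 * v1 * u3 + u3 * v2 * u2 * v1 * u1 + u1 * v2 * u3 * v1 * u2

/-- `θ₃` as a function on the product space `(M_{r×s})³ × (M_{s×r})²`. -/
noncomputable def Theta3F (r s : ℕ) :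
    (Matrix (Fin r) (Fin s) ℂ × Matrix (Fin r) (Fin s) ℂ × Matrix (Fin r) (Fin s) ℂ ×
      Matrix (Fin s) (Fin r) ℂ × Matrix (Fin s) (Fin r) ℂ) → Matrix (Fin r) (Fin s) ℂ :=
  fun p => theta3 p.1 p.2.1 p.2.2.1 p.2.2.2.1 p.2.2.2.2

/-- `η₁` as a function on the product space `(M_{r×s})³ × (M_{s×r})²`. -/
noncomputable def Eta1F (r s : ℕ) :
    (Matrix (Fin r) (Fin s) ℂ × Matrix (Fin r) (Fin s) ℂ × Matrix (Fin r) (Fin s) ℂ ×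
      Matrix (Fin s) (Fin r) ℂ × Matrix (Fin s) (Fin r) ℂ) → Matrix (Fin r) (Fin s) ℂ :=
  fun p => eta1 p.1 p.2.1 p.2.2.1 p.2.2.2.1 p.2.2.2.2

/-- `η₂` as a function on the product space `(M_{r×s})³ × (M_{s×r})²`. -/
noncomputable def Eta2F (r s : ℕ) :
    (Matrix (Fin r) (Fin s) ℂ × Matrix (Fin r) (Fin s) ℂ × Matrix (Fin r) (Fin s) ℂ ×
      Matrix (Fin s) (Fin r) ℂ × Matrix (Fin s) (Fin r) ℂ) → Matrix (Fin r) (Fin s) ℂ :=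
  fun p => eta2 p.1 p.2.1 p.2.2.1 p.2.2.2.1 p.2.2.2.2

/-- `η₃` as a function on the product space `(M_{r×s})³ × (M_{s×r})²`. -/
noncomputable def Eta3F (r s : ℕ) :
    (Matrix (Fin r) (Fin s) ℂ × Matrix (Fin r) (Fin s) ℂ × Matrix (Fin r) (Fin s) ℂ ×
      Matrix (Fin s) (Fin r) ℂ × Matrix (Fin s) (Fin r) ℂ) → Matrix (Fin r) (Fin s) ℂ :=
  fun p => eta3 p.1 p.2.1 p.2.2.1 p.2.2.2.1 p.2.2.2.2

/-- For `r ≥ 3` and `s ≥ 3` the four invariant forms `θ₃, η₁, η₂, η₃` are linearly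
independent over `ℂ` in the space of all functions `(M_{r×s})³ × (M_{s×r})² → M_{r×s}`. -/

lemma stdBM_mul_same {l m n : Type*} [DecidableEq l] [DecidableEq m] [DecidableEq n]
    [Fintype m] (i : l) (j : m) (k : n) (c d : ℂ) :
    single i j c * single j k d = single i k (c * d) := by
  ext a b
  by_cases hia : i = a <;> by_cases hkb : k = b <;>
    simp [Matrix.mul_apply, Matrix.single, hia, hkb, ite_and, Finset.sum_ite_eq]

lemma stdBM_mul_of_ne {l m n : Type*} [DecidableEq l] [DecidableEq m] [DecidableEq n]
    [Fintype m] (i : l) {j j' : m} (k : n) (h : j ≠ j') (c d : ℂ) :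
    single i j c * single j' k d = 0 := by
  ext a b
  simp only [Matrix.mul_apply, Matrix.single, Matrix.of_apply, ite_and,
    Matrix.zero_apply]
  apply Finset.sum_eq_zero
  intro x _
  by_cases h1 : j = x <;> by_cases h2 : j' = x <;>
    simp_all

theorem theta3_eta1_eta2_eta3_linearIndependent (r s : ℕ) (hr : 3 ≤ r) (hs : 3 ≤ s) :
    LinearIndependent ℂ ![Theta3F r s, Eta1F r s, Eta2F r s, Eta3F r s] := by
  rw [Fintype.linearIndependent_iff]
  intro g hg
  have key : ∀ (u1 u2 u3 : Matrix (Fin r) (Fin s) ℂ) (v1 v2 : Matrix (Fin s) (Fin r) ℂ)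
      (i : Fin r) (j : Fin s),
      g 0 * theta3 u1 u2 u3 v1 v2 i j + g 1 * eta1 u1 u2 u3 v1 v2 i j
        + g 2 * eta2 u1 u2 u3 v1 v2 i j + g 3 * eta3 u1 u2 u3 v1 v2 i j = 0 := by
    intro u1 u2 u3 v1 v2 i j
    have h := congrFun hg (u1, u2, u3, v1, v2)
    simp only [Fin.sum_univ_four, Matrix.cons_val_zero, Matrix.cons_val_one, Matrix.head_cons,
      Matrix.cons_val_two, Matrix.tail_cons, Matrix.cons_val_three, Pi.add_apply,
      Pi.smul_apply, Pi.zero_apply, Theta3F, Eta1F, Eta2F, Eta3F] at h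
    have h' := congrFun (congrFun h i) j
    simpa [Matrix.add_apply, Matrix.smul_apply, smul_eq_mul] using h'
  have h0r : (0 : ℕ) < r := by omega
  have h1r : (1 : ℕ) < r := by omega
  have h2r : (2 : ℕ) < r := by omega
  have h0s : (0 : ℕ) < s := by omega
  have h1s : (1 : ℕ) < s := by omega
  have h2s : (2 : ℕ) < s := by omega
  have hd : g 3 = 0 := by
    have h := key (single ⟨2, h2r⟩ ⟨1, h1s⟩ 1) (single ⟨0, h0r⟩ ⟨0, h0s⟩ 1)
      (single ⟨1, h1r⟩ ⟨2, h2s⟩ 1) (single ⟨2, h2s⟩ ⟨0, h0r⟩ 1)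
      (single ⟨1, h1s⟩ ⟨1, h1r⟩ 1) ⟨2, h2r⟩ ⟨0, h0s⟩
    simp [theta3, eta1, eta2, eta3, ip, stdBM_mul_same, stdBM_mul_of_ne, Matrix.trace_single_eq_of_ne,
      Matrix.trace_single_eq_same, Matrix.add_apply, Matrix.sub_apply,
      Matrix.smul_apply, smul_eq_mul, Fin.mk.injEq] at h
    linear_combination h
  have hc : g 2 = 0 := by
    have h := key (single ⟨2, h2r⟩ ⟨2, h2s⟩ 1) (single ⟨0, h0r⟩ ⟨0, h0s⟩ 1)
      (single ⟨1, h1r⟩ ⟨1, h1s⟩ 1) (single ⟨2, h2s⟩ ⟨2, h2r⟩ 1)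
      (single ⟨1, h1s⟩ ⟨0, h0r⟩ 1) ⟨1, h1r⟩ ⟨0, h0s⟩
    simp [theta3, eta1, eta2, eta3, ip, stdBM_mul_same, stdBM_mul_of_ne, Matrix.trace_single_eq_of_ne,
      Matrix.trace_single_eq_same, Matrix.add_apply, Matrix.sub_apply,
      Matrix.smul_apply, smul_eq_mul, Fin.mk.injEq, hd] at h
    linear_combination h
  have ha : g 0 = 0 := by
    have h := key (single ⟨1, h1r⟩ ⟨1, h1s⟩ 1) (single ⟨0, h0r⟩ ⟨2, h2s⟩ 1)
      (single ⟨2, h2r⟩ ⟨0, h0s⟩ 1) (single ⟨1, h1s⟩ ⟨1, h1r⟩ 1)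
      (single ⟨0, h0s⟩ ⟨2, h2r⟩ 1) ⟨0, h0r⟩ ⟨2, h2s⟩
    simp [theta3, eta1, eta2, eta3, ip, stdBM_mul_same, stdBM_mul_of_ne, Matrix.trace_single_eq_of_ne,
      Matrix.trace_single_eq_same, Matrix.add_apply, Matrix.sub_apply,
      Matrix.smul_apply, smul_eq_mul, Fin.mk.injEq, hd, hc] at h
    linear_combination h
  have hb : g 1 = 0 := by
    have h := key (single ⟨2, h2r⟩ ⟨1, h1s⟩ 1) (single ⟨1, h1r⟩ ⟨0, h0s⟩ 1)
      (single ⟨0, h0r⟩ ⟨2, h2s⟩ 1) (single ⟨2, h2s⟩ ⟨2, h2r⟩ 1)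
      (single ⟨1, h1s⟩ ⟨0, h0r⟩ 1) ⟨1, h1r⟩ ⟨0, h0s⟩
    simp [theta3, eta1, eta2, eta3, ip, stdBM_mul_same, stdBM_mul_of_ne, Matrix.trace_single_eq_of_ne,
      Matrix.trace_single_eq_same, Matrix.add_apply, Matrix.sub_apply,
      Matrix.smul_apply, smul_eq_mul, Fin.mk.injEq, hd, hc, ha] at h
    linear_combination h
  intro i
  fin_cases i <;> assumption
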